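/- Let d ≥ 2 and let T_d be the d-dimensional folded Baker's map on Q_d. For any k, k', l ∈ ℕ with l ≤ k', j_d ∈ ℤ ∩ [0, 2^k), and j_1, …, j_{d-1} ∈ ℤ ∩ [0, 2^{k'}), the set T_d^l(H^{j_d}_k ∩ V^{j_1,…,j_{d-1}}_{k'}) is a single dyadic box from G^d_{k+(d-1)l, k'-l}; that is, there exist a ∈ ℤ ∩ [0, 2^{k+(d-1)l}) and b_1, …, b_{d-1} ∈ ℤ ∩ [0, 2^{k'-l}) such that T_d^l(H^{j_d}_k ∩ V^{j_1,…,j_{d-1}}_{k'}) = H^a_{k+(d-1)l} ∩ V^{b_1,…,b_{d-1}}_{k'-l}. -/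

import Mathlib

open MeasureTheory Set Filter

noncomputable section

/-- The 2D folded Baker's map on `(0,1)²` (extended to all of `ℝ²` by the same formulas). -/
def T2 : ℝ × ℝ → ℝ × ℝ := fun p =>
  if p.1 < 1/2 then (1 - 2 * p.1, (1 - p.2) / 2)
  else if p.1 = 1/2 then (p.2, 1/2)
  else (2 * p.1 - 1, (1 + p.2) / 2)

/-- The map applying `T2` to the pair of coordinates `(x i, x j)` of `x ∈ ℝ^d`, leaving all
other coordinates unchanged. -/
def Tapply (d : ℕ) (i j : Fin d) (x : EuclideanSpace ℝ (Fin d)) :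
    EuclideanSpace ℝ (Fin d) := WithLp.toLp 2 fun l =>
  if l = i then (T2 (x i, x j)).1 else if l = j then (T2 (x i, x j)).2 else x l

/-- The `d`-dimensional folded Baker's map `T_d = T_{d,d-1} ∘ ⋯ ∘ T_{d,1}`, where `T_{d,i}`
applies `T2` to the coordinates `(x_i, x_d)`. -/
def Td (d : ℕ) : EuclideanSpace ℝ (Fin d) → EuclideanSpace ℝ (Fin d) := fun x =>
  (List.finRange d).foldl
    (fun y (i : Fin d) => if hi : i.val < d - 1 then Tapply d i ⟨d - 1, by omega⟩ y else y) x

/-- The open unit cube `Q_d = (0,1)^d`. -/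
def Qd (d : ℕ) : Set (EuclideanSpace ℝ (Fin d)) := {x | ∀ i, x i ∈ Ioo (0:ℝ) 1}

/-- `Q_d` minus all points with a dyadic rational coordinate. -/
def Qd' (d : ℕ) : Set (EuclideanSpace ℝ (Fin d)) :=
  Qd d \ {x | ∃ i, ∃ k : ℕ, ∃ m : ℤ, 2 ^ k * x i = (m : ℝ)}

/-- The last coordinate `x_d` of `x ∈ ℝ^d`. -/
def lastCoord (d : ℕ) (x : EuclideanSpace ℝ (Fin d)) : ℝ :=
  if h : 0 < d then x ⟨d - 1, by omega⟩ else 0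

/-- The horizontal dyadic slab `H^j_k` of width `2^{-k}`. -/
def Hslab (d : ℕ) (j k : ℕ) : Set (EuclideanSpace ℝ (Fin d)) :=
  {x | lastCoord d x ∈ Ioo ((j : ℝ) / 2 ^ k) (((j : ℝ) + 1) / 2 ^ k)} ∩ Qd' d

/-- The vertical dyadic strip `V^{j_1,…,j_{d-1}}_{k'}` of width `2^{-k'}` (indexed by a
function `j : Fin d → ℕ` whose values at the first `d-1` coordinates are the indices). -/
def VstripD (d : ℕ) (j : Fin d → ℕ) (k' : ℕ) : Set (EuclideanSpace ℝ (Fin d)) :=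
  {x | ∀ i : Fin d, i.val < d - 1 →
    x i ∈ Ioo ((j i : ℝ) / 2 ^ k') (((j i : ℝ) + 1) / 2 ^ k')} ∩ Qd' d


/-- `x` is a dyadic rational. -/
def Dy (t : ℝ) : Prop := ∃ k : ℕ, ∃ m : ℤ, 2 ^ k * t = (m : ℝ)

lemma dyA {x : ℝ} (h : Dy (1 - 2 * x)) : Dy x := by
  obtain ⟨k, m, h⟩ := h
  refine ⟨k + 1, 2 ^ k - m, ?_⟩
  push_cast
  rw [pow_succ] at *
  nlinarith [h]

lemma dyB {x : ℝ} (h : Dy ((1 - x) / 2)) : Dy x := by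
  obtain ⟨k, m, h⟩ := h
  refine ⟨k, 2 ^ k - 2 * m, ?_⟩
  push_cast
  nlinarith [h]

lemma dyC {x : ℝ} (h : Dy (2 * x - 1)) : Dy x := by
  obtain ⟨k, m, h⟩ := h
  refine ⟨k + 1, 2 ^ k + m, ?_⟩
  push_cast
  rw [pow_succ] at *
  nlinarith [h]

lemma dyD {x : ℝ} (h : Dy ((1 + x) / 2)) : Dy x := by
  obtain ⟨k, m, h⟩ := h
  refine ⟨k, 2 * m - 2 ^ k, ?_⟩
  push_cast
  nlinarith [h]

lemma mapA1 {j b s : ℕ} (h : j + b + 1 = 2 ^ s) {x : ℝ}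
    (h1 : (j : ℝ) / 2 ^ (s + 1) < x) (h2 : x < ((j : ℝ) + 1) / 2 ^ (s + 1)) :
    (b : ℝ) / 2 ^ s < 1 - 2 * x ∧ 1 - 2 * x < ((b : ℝ) + 1) / 2 ^ s := by
  have hs : (0 : ℝ) < 2 ^ s := by positivity
  have hs1 : (0 : ℝ) < 2 ^ (s + 1) := by positivity
  have hh : (j : ℝ) + b + 1 = 2 ^ s := by exact_mod_cast h
  rw [div_lt_iff₀ hs1] at h1
  rw [lt_div_iff₀ hs1] at h2
  rw [pow_succ] at h1 h2
  constructor
  · rw [div_lt_iff₀ hs]; nlinarith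
  · rw [lt_div_iff₀ hs]; nlinarith

lemma mapA2 {j b s : ℕ} (h : j + b + 1 = 2 ^ s) {y : ℝ}
    (h1 : (b : ℝ) / 2 ^ s < y) (h2 : y < ((b : ℝ) + 1) / 2 ^ s) :
    (j : ℝ) / 2 ^ (s + 1) < (1 - y) / 2 ∧ (1 - y) / 2 < ((j : ℝ) + 1) / 2 ^ (s + 1) := by
  have hs : (0 : ℝ) < 2 ^ s := by positivity
  have hs1 : (0 : ℝ) < 2 ^ (s + 1) := by positivity
  have hh : (j : ℝ) + b + 1 = 2 ^ s := by exact_mod_cast h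
  rw [div_lt_iff₀ hs] at h1
  rw [lt_div_iff₀ hs] at h2
  constructor
  · rw [div_lt_iff₀ hs1, pow_succ]; nlinarith
  · rw [lt_div_iff₀ hs1, pow_succ]; nlinarith

lemma mapB1 {j b s : ℕ} (h : b + 2 ^ s = j) {x : ℝ}
    (h1 : (j : ℝ) / 2 ^ (s + 1) < x) (h2 : x < ((j : ℝ) + 1) / 2 ^ (s + 1)) :
    (b : ℝ) / 2 ^ s < 2 * x - 1 ∧ 2 * x - 1 < ((b : ℝ) + 1) / 2 ^ s := by
  have hs : (0 : ℝ) < 2 ^ s := by positivity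
  have hs1 : (0 : ℝ) < 2 ^ (s + 1) := by positivity
  have hh : (b : ℝ) + 2 ^ s = j := by exact_mod_cast h
  rw [div_lt_iff₀ hs1] at h1
  rw [lt_div_iff₀ hs1] at h2
  rw [pow_succ] at h1 h2
  constructor
  · rw [div_lt_iff₀ hs]; nlinarith
  · rw [lt_div_iff₀ hs]; nlinarith

lemma mapB2 {j b s : ℕ} (h : b + 2 ^ s = j) {y : ℝ}
    (h1 : (b : ℝ) / 2 ^ s < y) (h2 : y < ((b : ℝ) + 1) / 2 ^ s) :
    (j : ℝ) / 2 ^ (s + 1) < (1 + y) / 2 ∧ (1 + y) / 2 < ((j : ℝ) + 1) / 2 ^ (s + 1) := by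
  have hs : (0 : ℝ) < 2 ^ s := by positivity
  have hs1 : (0 : ℝ) < 2 ^ (s + 1) := by positivity
  have hh : (b : ℝ) + 2 ^ s = j := by exact_mod_cast h
  rw [div_lt_iff₀ hs] at h1
  rw [lt_div_iff₀ hs] at h2
  constructor
  · rw [div_lt_iff₀ hs1, pow_succ]; nlinarith
  · rw [lt_div_iff₀ hs1, pow_succ]; nlinarith

/-- upper bound: if index below half-count, whole interval is below 1/2 -/
lemma upA {j s : ℕ} (h : j + 1 ≤ 2 ^ s) {x : ℝ} (h2 : x < ((j : ℝ) + 1) / 2 ^ (s + 1)) :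
    x < 1 / 2 := by
  have hs1 : (0 : ℝ) < 2 ^ (s + 1) := by positivity
  have hh : (j : ℝ) + 1 ≤ 2 ^ s := by exact_mod_cast h
  rw [lt_div_iff₀ hs1] at h2
  rw [pow_succ] at h2
  rw [lt_div_iff₀ (by norm_num : (0:ℝ) < 2)]
  nlinarith [pow_pos (by norm_num : (0:ℝ) < 2) s]

/-- lower bound: if index at least half-count, whole interval is above 1/2 -/
lemma loB {j s : ℕ} (h : 2 ^ s ≤ j) {x : ℝ} (h1 : (j : ℝ) / 2 ^ (s + 1) < x) :
    1 / 2 < x := by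
  have hs1 : (0 : ℝ) < 2 ^ (s + 1) := by positivity
  have hh : (2 : ℝ) ^ s ≤ j := by exact_mod_cast h
  rw [div_lt_iff₀ hs1] at h1
  rw [pow_succ] at h1
  rw [div_lt_iff₀ (by norm_num : (0:ℝ) < 2)]
  nlinarith [pow_pos (by norm_num : (0:ℝ) < 2) s]

def Box (d : ℕ) (c : Fin d → ℕ × ℕ) : Set (EuclideanSpace ℝ (Fin d)) :=
  {x | ∀ i : Fin d, x i ∈ Ioo (((c i).1 : ℝ) / 2 ^ (c i).2) ((((c i).1 : ℝ) + 1) / 2 ^ (c i).2)}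
    ∩ Qd' d

lemma mem_Box {d : ℕ} {c : Fin d → ℕ × ℕ} {x : EuclideanSpace ℝ (Fin d)} :
    x ∈ Box d c ↔
      (∀ i : Fin d, ((c i).1 : ℝ) / 2 ^ (c i).2 < x i ∧ x i < (((c i).1 : ℝ) + 1) / 2 ^ (c i).2)
        ∧ (∀ i, 0 < x i ∧ x i < 1) ∧ (∀ i, ¬ Dy (x i)) := by
  simp only [Box, Qd', Qd, Dy, mem_inter_iff, mem_setOf_eq, mem_diff, mem_Ioo, not_exists]


lemma tapply_image (d : ℕ) (i : Fin d) (hlt : d - 1 < d) (hi : (i : ℕ) < d - 1)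
    (c : Fin d → ℕ × ℕ) (hval : ∀ n, (c n).1 < 2 ^ (c n).2) (m : ℕ) (hm : (c i).2 = m + 1) :
    ∃ c' : Fin d → ℕ × ℕ,
      (∀ n, (c' n).1 < 2 ^ (c' n).2) ∧
      (c' i).2 = m ∧
      (∀ n, n ≠ i → n ≠ ⟨d - 1, hlt⟩ → c' n = c n) ∧
      (c' ⟨d - 1, hlt⟩).2 = (c ⟨d - 1, hlt⟩).2 + 1 ∧
      Tapply d i ⟨d - 1, hlt⟩ '' Box d c = Box d c' := by
  set L : Fin d := ⟨d - 1, hlt⟩ with hL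
  have hiL : i ≠ L := by
    intro h
    have : (i : ℕ) = d - 1 := by rw [h]
    omega
  have hLi : L ≠ i := hiL.symm
  have hvi : (c i).1 < 2 ^ (m + 1) := by rw [← hm]; exact hval i
  have hvl : (c L).1 < 2 ^ (c L).2 := hval L
  rcases lt_or_ge (c i).1 (2 ^ m) with hcase | hcase
  · -- left branch: x i < 1/2
    obtain ⟨bi, hbi⟩ : ∃ bi, (c i).1 + bi + 1 = 2 ^ m := ⟨2 ^ m - 1 - (c i).1, by omega⟩
    obtain ⟨a, ha⟩ : ∃ a, a + (c L).1 + 1 = 2 ^ (c L).2 := ⟨2 ^ (c L).2 - 1 - (c L).1, by omega⟩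
    set c' : Fin d → ℕ × ℕ :=
      Function.update (Function.update c i (bi, m)) L (a, (c L).2 + 1) with hc'def
    have hc'i : c' i = (bi, m) := by
      rw [hc'def, Function.update_of_ne hiL, Function.update_self]
    have hc'L : c' L = (a, (c L).2 + 1) := by rw [hc'def, Function.update_self]
    have hc'n : ∀ n, n ≠ i → n ≠ L → c' n = c n := by
      intro n h1 h2
      rw [hc'def, Function.update_of_ne h2, Function.update_of_ne h1]
    refine ⟨c', ?_, by rw [hc'i], hc'n, by rw [hc'L], ?_⟩
    · intro n
      rcases eq_or_ne n i with hni | hni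
      · rw [hni, hc'i]; simpa using by omega
      rcases eq_or_ne n L with hnL | hnL
      · rw [hnL, hc'L]; simpa using by omega
      · rw [hc'n n hni hnL]; exact hval n
    ext y
    constructor
    · rintro ⟨x, hx, rfl⟩
      rw [mem_Box] at hx ⊢
      obtain ⟨hI, hQ, hD⟩ := hx
      have hIi := hI i
      rw [hm] at hIi
      have hIL := hI L
      have hx12 : x i < 1 / 2 := upA (by omega) hIi.2
      have hT2 : T2 (x i, x L) = (1 - 2 * x i, (1 - x L) / 2) := by
        simp only [T2]; rw [if_pos hx12]
      have hTap : ∀ n, Tapply d i L x n =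
          if n = i then (T2 (x i, x L)).1 else if n = L then (T2 (x i, x L)).2 else x n :=
        fun n => rfl
      have hTi : Tapply d i L x i = 1 - 2 * x i := by
        rw [hTap, if_pos rfl, hT2]
      have hTL : Tapply d i L x L = (1 - x L) / 2 := by
        rw [hTap, if_neg hLi, if_pos rfl, hT2]
      have hTn : ∀ n, n ≠ i → n ≠ L → Tapply d i L x n = x n := by
        intro n h1 h2; rw [hTap, if_neg h1, if_neg h2]
      refine ⟨fun n => ?_, fun n => ?_, fun n => ?_⟩
      · rcases eq_or_ne n i with hni | hni
        · rw [hni, hTi, hc'i]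
          exact mapA1 hbi hIi.1 hIi.2
        rcases eq_or_ne n L with hnL | hnL
        · rw [hnL, hTL, hc'L]
          exact mapA2 ha hIL.1 hIL.2
        · rw [hTn n hni hnL, hc'n n hni hnL]; exact hI n
      · rcases eq_or_ne n i with hni | hni
        · rw [hni, hTi]
          constructor
          · linarith
          · linarith [(hQ i).1]
        rcases eq_or_ne n L with hnL | hnL
        · rw [hnL, hTL]
          constructor
          · linarith [(hQ L).2]
          · linarith [(hQ L).1]
        · rw [hTn n hni hnL]; exact hQ n
      · rcases eq_or_ne n i with hni | hni
        · rw [hni, hTi]; exact fun h => hD i (dyA h)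
        rcases eq_or_ne n L with hnL | hnL
        · rw [hnL, hTL]; exact fun h => hD L (dyB h)
        · rw [hTn n hni hnL]; exact hD n
    · intro hy
      rw [mem_Box] at hy
      obtain ⟨hI, hQ, hD⟩ := hy
      have hIi := hI i
      rw [hc'i] at hIi
      have hIL := hI L
      rw [hc'L] at hIL
      set x : EuclideanSpace ℝ (Fin d) :=
        WithLp.toLp 2 (fun n => if n = i then (1 - y i) / 2 else if n = L then 1 - 2 * y L else y n) with hxdef
      have hxi : x i = (1 - y i) / 2 := by rw [hxdef]; simp
      have hxL : x L = 1 - 2 * y L := by rw [hxdef]; simp [hLi]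
      have hxn : ∀ n, n ≠ i → n ≠ L → x n = y n := by
        intro n h1 h2; rw [hxdef]; simp [h1, h2]
      have hyL12 : y L < 1 / 2 := upA (by omega) hIL.2
      refine ⟨x, ?_, ?_⟩
      · rw [mem_Box]
        refine ⟨fun n => ?_, fun n => ?_, fun n => ?_⟩
        · rcases eq_or_ne n i with hni | hni
          · rw [hni, hxi, hm]
            exact mapA2 hbi hIi.1 hIi.2
          rcases eq_or_ne n L with hnL | hnL
          · rw [hnL, hxL]
            exact mapA1 ha hIL.1 hIL.2
          · rw [hxn n hni hnL]
            have := hI n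
            rwa [hc'n n hni hnL] at this
        · rcases eq_or_ne n i with hni | hni
          · rw [hni, hxi]
            constructor
            · linarith [(hQ i).2]
            · linarith [(hQ i).1]
          rcases eq_or_ne n L with hnL | hnL
          · rw [hnL, hxL]
            constructor
            · linarith
            · linarith [(hQ L).1]
          · rw [hxn n hni hnL]; exact hQ n
        · rcases eq_or_ne n i with hni | hni
          · rw [hni, hxi]; exact fun h => hD i (dyB h)
          rcases eq_or_ne n L with hnL | hnL
          · rw [hnL, hxL]; exact fun h => hD L (dyA h)
          · rw [hxn n hni hnL]; exact hD n
      · have hx12 : x i < 1 / 2 := by rw [hxi]; linarith [(hQ i).1]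
        have hT2 : T2 (x i, x L) = (y i, y L) := by
          rw [hxi, hxL]
          simp only [T2]
          rw [if_pos (show (1 - y i) / 2 < 1/2 by linarith [(hQ i).1])]
          rw [Prod.mk.injEq]
          constructor <;> ring
        ext n
        have hTap : Tapply d i L x n =
            if n = i then (T2 (x i, x L)).1 else if n = L then (T2 (x i, x L)).2 else x n := rfl
        rw [hTap, hT2]
        rcases eq_or_ne n i with hni | hni
        · rw [if_pos hni, hni]
        rcases eq_or_ne n L with hnL | hnL
        · rw [if_neg hni, if_pos hnL, hnL]
        · rw [if_neg hni, if_neg hnL, hxn n hni hnL]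
  · -- right branch: x i > 1/2
    obtain ⟨bi, hbi⟩ : ∃ bi, bi + 2 ^ m = (c i).1 := ⟨(c i).1 - 2 ^ m, by omega⟩
    obtain ⟨a, ha⟩ : ∃ a, (c L).1 + 2 ^ (c L).2 = a := ⟨(c L).1 + 2 ^ (c L).2, rfl⟩
    set c' : Fin d → ℕ × ℕ :=
      Function.update (Function.update c i (bi, m)) L (a, (c L).2 + 1) with hc'def
    have hc'i : c' i = (bi, m) := by
      rw [hc'def, Function.update_of_ne hiL, Function.update_self]
    have hc'L : c' L = (a, (c L).2 + 1) := by rw [hc'def, Function.update_self]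
    have hc'n : ∀ n, n ≠ i → n ≠ L → c' n = c n := by
      intro n h1 h2
      rw [hc'def, Function.update_of_ne h2, Function.update_of_ne h1]
    refine ⟨c', ?_, by rw [hc'i], hc'n, by rw [hc'L], ?_⟩
    · intro n
      rcases eq_or_ne n i with hni | hni
      · rw [hni, hc'i]; simpa using by omega
      rcases eq_or_ne n L with hnL | hnL
      · rw [hnL, hc'L]; simpa using by omega
      · rw [hc'n n hni hnL]; exact hval n
    ext y
    constructor
    · rintro ⟨x, hx, rfl⟩
      rw [mem_Box] at hx ⊢
      obtain ⟨hI, hQ, hD⟩ := hx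
      have hIi := hI i
      rw [hm] at hIi
      have hIL := hI L
      have hx12 : 1 / 2 < x i := loB hcase hIi.1
      have hT2 : T2 (x i, x L) = (2 * x i - 1, (1 + x L) / 2) := by
        simp only [T2]
        rw [if_neg (by linarith), if_neg (by intro h; rw [h] at hx12; linarith)]
      have hTap : ∀ n, Tapply d i L x n =
          if n = i then (T2 (x i, x L)).1 else if n = L then (T2 (x i, x L)).2 else x n :=
        fun n => rfl
      have hTi : Tapply d i L x i = 2 * x i - 1 := by
        rw [hTap, if_pos rfl, hT2]
      have hTL : Tapply d i L x L = (1 + x L) / 2 := by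
        rw [hTap, if_neg hLi, if_pos rfl, hT2]
      have hTn : ∀ n, n ≠ i → n ≠ L → Tapply d i L x n = x n := by
        intro n h1 h2; rw [hTap, if_neg h1, if_neg h2]
      refine ⟨fun n => ?_, fun n => ?_, fun n => ?_⟩
      · rcases eq_or_ne n i with hni | hni
        · rw [hni, hTi, hc'i]
          exact mapB1 hbi hIi.1 hIi.2
        rcases eq_or_ne n L with hnL | hnL
        · rw [hnL, hTL, hc'L]
          exact mapB2 ha hIL.1 hIL.2
        · rw [hTn n hni hnL, hc'n n hni hnL]; exact hI n
      · rcases eq_or_ne n i with hni | hni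
        · rw [hni, hTi]
          constructor
          · linarith
          · linarith [(hQ i).2]
        rcases eq_or_ne n L with hnL | hnL
        · rw [hnL, hTL]
          constructor
          · linarith [(hQ L).1]
          · linarith [(hQ L).2]
        · rw [hTn n hni hnL]; exact hQ n
      · rcases eq_or_ne n i with hni | hni
        · rw [hni, hTi]; exact fun h => hD i (dyC h)
        rcases eq_or_ne n L with hnL | hnL
        · rw [hnL, hTL]; exact fun h => hD L (dyD h)
        · rw [hTn n hni hnL]; exact hD n
    · intro hy
      rw [mem_Box] at hy
      obtain ⟨hI, hQ, hD⟩ := hy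
      have hIi := hI i
      rw [hc'i] at hIi
      have hIL := hI L
      rw [hc'L] at hIL
      set x : EuclideanSpace ℝ (Fin d) :=
        WithLp.toLp 2 (fun n => if n = i then (1 + y i) / 2 else if n = L then 2 * y L - 1 else y n) with hxdef
      have hxi : x i = (1 + y i) / 2 := by rw [hxdef]; simp
      have hxL : x L = 2 * y L - 1 := by rw [hxdef]; simp [hLi]
      have hxn : ∀ n, n ≠ i → n ≠ L → x n = y n := by
        intro n h1 h2; rw [hxdef]; simp [h1, h2]
      have hyL12 : 1 / 2 < y L := loB (by omega) hIL.1
      refine ⟨x, ?_, ?_⟩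
      · rw [mem_Box]
        refine ⟨fun n => ?_, fun n => ?_, fun n => ?_⟩
        · rcases eq_or_ne n i with hni | hni
          · rw [hni, hxi, hm]
            exact mapB2 hbi hIi.1 hIi.2
          rcases eq_or_ne n L with hnL | hnL
          · rw [hnL, hxL]
            exact mapB1 ha hIL.1 hIL.2
          · rw [hxn n hni hnL]
            have := hI n
            rwa [hc'n n hni hnL] at this
        · rcases eq_or_ne n i with hni | hni
          · rw [hni, hxi]
            constructor
            · linarith [(hQ i).1]
            · linarith [(hQ i).2]
          rcases eq_or_ne n L with hnL | hnL
          · rw [hnL, hxL]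
            constructor
            · linarith
            · linarith [(hQ L).2]
          · rw [hxn n hni hnL]; exact hQ n
        · rcases eq_or_ne n i with hni | hni
          · rw [hni, hxi]; exact fun h => hD i (dyD h)
          rcases eq_or_ne n L with hnL | hnL
          · rw [hnL, hxL]; exact fun h => hD L (dyC h)
          · rw [hxn n hni hnL]; exact hD n
      · have hx12 : 1 / 2 < x i := by rw [hxi]; linarith [(hQ i).1]
        have hT2 : T2 (x i, x L) = (y i, y L) := by
          rw [hxi, hxL]
          simp only [T2]
          rw [if_neg (show ¬ ((1 + y i) / 2 < 1/2) by push_neg; linarith [(hQ i).1]),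
            if_neg (show ¬ ((1 + y i) / 2 = 1/2) by intro h; nlinarith [(hQ i).1])]
          rw [Prod.mk.injEq]
          constructor <;> ring
        ext n
        have hTap : Tapply d i L x n =
            if n = i then (T2 (x i, x L)).1 else if n = L then (T2 (x i, x L)).2 else x n := rfl
        rw [hTap, hT2]
        rcases eq_or_ne n i with hni | hni
        · rw [if_pos hni, hni]
        rcases eq_or_ne n L with hnL | hnL
        · rw [if_neg hni, if_pos hnL, hnL]
        · rw [if_neg hni, if_neg hnL, hxn n hni hnL]

lemma foldl_image {α ι : Type*} (F : ι → α → α) :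
    ∀ (L : List ι) (s : Set α),
      (fun x => L.foldl (fun y i => F i y) x) '' s = L.foldl (fun t i => F i '' t) s
  | [], s => by simp
  | a :: L, s => by
    simp only [List.foldl_cons]
    rw [← foldl_image F L (F a '' s), ← Set.image_comp]
    rfl

lemma fold_step (d : ℕ) (hlt : d - 1 < d) :
    ∀ (L : List (Fin d)), L.Nodup → ∀ (c : Fin d → ℕ × ℕ),
      (∀ n, (c n).1 < 2 ^ (c n).2) →
      (∀ i ∈ L, (i : ℕ) < d - 1 → 1 ≤ (c i).2) →
      ∃ c' : Fin d → ℕ × ℕ,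
        (∀ n, (c' n).1 < 2 ^ (c' n).2) ∧
        (∀ i ∈ L, (i : ℕ) < d - 1 → (c' i).2 = (c i).2 - 1) ∧
        (∀ i : Fin d, (i : ℕ) < d - 1 → i ∉ L → c' i = c i) ∧
        (c' ⟨d - 1, hlt⟩).2
          = (c ⟨d - 1, hlt⟩).2 + (L.filter (fun i : Fin d => decide ((i : ℕ) < d - 1))).length ∧
        L.foldl (fun t (i : Fin d) =>
            (fun y => if hi : (i : ℕ) < d - 1 then Tapply d i ⟨d - 1, by omega⟩ y else y) '' t)
          (Box d c) = Box d c' := by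
  intro L
  induction L with
  | nil =>
    intro _ c hval _
    exact ⟨c, hval, by simp, fun i _ _ => rfl, by simp, rfl⟩
  | cons a L ih =>
    intro hnd c hval hlev
    have haL : a ∉ L := (List.nodup_cons.mp hnd).1
    have hndL : L.Nodup := (List.nodup_cons.mp hnd).2
    by_cases ha : (a : ℕ) < d - 1
    · obtain ⟨m, hm⟩ : ∃ m, (c a).2 = m + 1 :=
        ⟨(c a).2 - 1, by have := hlev a (by simp) ha; omega⟩
      obtain ⟨c1, hval1, h1i, h1n, h1L, him⟩ := tapply_image d a hlt ha c hval m hm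
      have hc1 : ∀ i, i ≠ a → (i : ℕ) < d - 1 → c1 i = c i := by
        intro i hia hi
        exact h1n i hia (by intro h; rw [h] at hi; simp at hi)
      obtain ⟨c', hval', h2, h3, h4, hfold⟩ := ih hndL c1 hval1 (by
        intro i hiL hi
        rw [hc1 i (by rintro rfl; exact haL hiL) hi]
        exact hlev i (by simp [hiL]) hi)
      refine ⟨c', hval', ?_, ?_, ?_, ?_⟩
      · intro i hiL hi
        by_cases hia : i = a
        · subst hia
          rw [h3 i hi haL, h1i, hm]
          omega
        · have hiL' : i ∈ L := (List.mem_cons.mp hiL).resolve_left hia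
          rw [h2 i hiL' hi, hc1 i hia hi]
      · intro i hi hiC
        rw [h3 i hi (fun h => hiC (List.mem_cons_of_mem a h)),
          hc1 i (fun h => hiC (h ▸ List.mem_cons_self (a := a) (l := L))) hi]
      · rw [h4, h1L, List.filter_cons, if_pos (by simpa using ha)]
        simp; omega
      · rw [List.foldl_cons, ← hfold]
        congr 1
        rw [show (fun y => if hi : (a : ℕ) < d - 1 then Tapply d a ⟨d - 1, by omega⟩ y else y)
            = Tapply d a ⟨d - 1, hlt⟩ from funext fun y => dif_pos ha]
        exact him
    · obtain ⟨c', hval', h2, h3, h4, hfold⟩ := ih hndL c hval (by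
        intro i hiL hi; exact hlev i (by simp [hiL]) hi)
      refine ⟨c', hval', ?_, ?_, ?_, ?_⟩
      · intro i hiL hi
        by_cases hia : i = a
        · subst hia; exact absurd hi ha
        · exact h2 i ((List.mem_cons.mp hiL).resolve_left hia) hi
      · intro i hi hiC
        exact h3 i hi (fun h => hiC (List.mem_cons_of_mem a h))
      · rw [h4, List.filter_cons, if_neg (by simpa using ha)]
      · rw [List.foldl_cons, ← hfold]
        congr 1
        rw [show (fun y => if hi : (a : ℕ) < d - 1 then Tapply d a ⟨d - 1, by omega⟩ y else y)
            = id from funext fun y => dif_neg ha, Set.image_id]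

lemma finRange_filter_length (d : ℕ) (h : d - 1 < d) :
    ((List.finRange d).filter (fun i : Fin d => decide ((i : ℕ) < d - 1))).length = d - 1 := by
  have h1 : ((List.finRange d).filter (fun i : Fin d => decide ((i : ℕ) < d - 1))).length
      = (Finset.univ.filter (fun i : Fin d => (i : ℕ) < d - 1)).card := by rfl
  have h2 : (Finset.univ.filter (fun i : Fin d => (i : ℕ) < d - 1))
      = Finset.Iio (⟨d - 1, h⟩ : Fin d) := by
    ext i
    simp [Fin.lt_def]
  rw [h1, h2, Fin.card_Iio]

lemma td_image (d : ℕ) (hd : 2 ≤ d) (hlt : d - 1 < d) (c : Fin d → ℕ × ℕ)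
    (hval : ∀ n, (c n).1 < 2 ^ (c n).2)
    (hlev : ∀ i : Fin d, (i : ℕ) < d - 1 → 1 ≤ (c i).2) :
    ∃ c' : Fin d → ℕ × ℕ,
      (∀ n, (c' n).1 < 2 ^ (c' n).2) ∧
      (∀ i : Fin d, (i : ℕ) < d - 1 → (c' i).2 = (c i).2 - 1) ∧
      (c' ⟨d - 1, hlt⟩).2 = (c ⟨d - 1, hlt⟩).2 + (d - 1) ∧
      Td d '' Box d c = Box d c' := by
  obtain ⟨c', hval', h2, h3, h4, hfold⟩ := fold_step d hlt (List.finRange d)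
    (List.nodup_finRange d) c hval (fun i _ hi => hlev i hi)
  refine ⟨c', hval', fun i hi => h2 i (List.mem_finRange i) hi, ?_, ?_⟩
  · rw [h4, finRange_filter_length d hlt]
  · rw [show Td d '' Box d c
        = (List.finRange d).foldl (fun t (i : Fin d) =>
            (fun y => if hi : (i : ℕ) < d - 1 then Tapply d i ⟨d - 1, by omega⟩ y else y) '' t)
          (Box d c) from foldl_image _ _ _]
    exact hfold

lemma iter_image (d : ℕ) (hd : 2 ≤ d) (hlt : d - 1 < d) :
    ∀ (l : ℕ) (c : Fin d → ℕ × ℕ), (∀ n, (c n).1 < 2 ^ (c n).2) →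
      (∀ i : Fin d, (i : ℕ) < d - 1 → l ≤ (c i).2) →
      ∃ c' : Fin d → ℕ × ℕ,
        (∀ n, (c' n).1 < 2 ^ (c' n).2) ∧
        (∀ i : Fin d, (i : ℕ) < d - 1 → (c' i).2 = (c i).2 - l) ∧
        (c' ⟨d - 1, hlt⟩).2 = (c ⟨d - 1, hlt⟩).2 + (d - 1) * l ∧
        (Td d)^[l] '' Box d c = Box d c'
  | 0, c, hval, _ => ⟨c, hval, by simp, by simp, by simp⟩
  | l + 1, c, hval, hlev => by
    obtain ⟨c1, hval1, h2, h3, him⟩ := td_image d hd hlt c hval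
      (fun i hi => le_trans (by omega) (hlev i hi))
    obtain ⟨c', hval', h2', h3', him'⟩ := iter_image d hd hlt l c1 hval1 (by
      intro i hi
      rw [h2 i hi]
      have := hlev i hi
      omega)
    refine ⟨c', hval', ?_, ?_, ?_⟩
    · intro i hi
      rw [h2' i hi, h2 i hi]
      omega
    · rw [h3', h3]
      ring
    · rw [Function.iterate_succ, Set.image_comp, him, him']

lemma box_inter_eq (d : ℕ) (hd : 2 ≤ d) (hlt : d - 1 < d) (c : Fin d → ℕ × ℕ)
    (jd kk k2 : ℕ) (j' : Fin d → ℕ)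
    (hlast : c ⟨d - 1, hlt⟩ = (jd, kk))
    (hoth : ∀ i : Fin d, (i : ℕ) < d - 1 → c i = (j' i, k2)) :
    Hslab d jd kk ∩ VstripD d j' k2 = Box d c := by
  ext x
  simp only [Hslab, VstripD, Box, mem_inter_iff, mem_setOf_eq, mem_Ioo, lastCoord]
  rw [dif_pos (by omega : 0 < d)]
  constructor
  · rintro ⟨⟨hH, hQ⟩, hV, -⟩
    refine ⟨fun i => ?_, hQ⟩
    rcases lt_or_ge (i : ℕ) (d - 1) with hi | hi
    · rw [hoth i hi]
      exact hV i hi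
    · have hvi := i.isLt
      have hieq : i = ⟨d - 1, hlt⟩ := Fin.ext (by simp only [Fin.val_mk]; omega)
      rw [hieq, hlast]
      exact hH
  · rintro ⟨hB, hQ⟩
    refine ⟨⟨?_, hQ⟩, fun i hi => ?_, hQ⟩
    · have := hB ⟨d - 1, hlt⟩
      rw [hlast] at this
      exact this
    · have := hB i
      rw [hoth i hi] at this
      exact this


theorem image_of_dyadic_box (d : ℕ) (hd : 2 ≤ d) (k k' l : ℕ) (hl : l ≤ k')
    (jd : ℕ) (hjd : jd < 2 ^ k) (j : Fin d → ℕ) (hj : ∀ i : Fin d, i.val < d - 1 → j i < 2 ^ k') :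
    ∃ a : ℕ, a < 2 ^ (k + (d - 1) * l) ∧
      ∃ b : Fin d → ℕ, (∀ i : Fin d, i.val < d - 1 → b i < 2 ^ (k' - l)) ∧
        (Td d)^[l] '' (Hslab d jd k ∩ VstripD d j k')
          = Hslab d a (k + (d - 1) * l) ∩ VstripD d b (k' - l) := by
  have hlt : d - 1 < d := by omega
  set c0 : Fin d → ℕ × ℕ := fun i => if (i : ℕ) < d - 1 then (j i, k') else (jd, k) with hc0
  have hc0last : c0 ⟨d - 1, hlt⟩ = (jd, k) := by
    rw [hc0]; simp
  have hc0oth : ∀ i : Fin d, (i : ℕ) < d - 1 → c0 i = (j i, k') := by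
    intro i hi; rw [hc0]; simp [hi]
  have hval0 : ∀ n, (c0 n).1 < 2 ^ (c0 n).2 := by
    intro n
    rw [hc0]
    by_cases h : (n : ℕ) < d - 1
    · simpa [h] using hj n h
    · simpa [h] using hjd
  obtain ⟨c', hval', h2, h3, him⟩ := iter_image d hd hlt l c0 hval0 (by
    intro i hi
    rw [hc0oth i hi]
    exact hl)
  have hlastlev : (c' ⟨d - 1, hlt⟩).2 = k + (d - 1) * l := by
    rw [h3, hc0last]
  have hothlev : ∀ i : Fin d, (i : ℕ) < d - 1 → (c' i).2 = k' - l := by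
    intro i hi
    rw [h2 i hi, hc0oth i hi]
  refine ⟨(c' ⟨d - 1, hlt⟩).1, ?_, fun i => (c' i).1, ?_, ?_⟩
  · have := hval' ⟨d - 1, hlt⟩
    rwa [hlastlev] at this
  · intro i hi
    have := hval' i
    rwa [hothlev i hi] at this
  · rw [box_inter_eq d hd hlt c0 jd k k' j hc0last hc0oth, him]
    rw [box_inter_eq d hd hlt c' (c' ⟨d - 1, hlt⟩).1 (k + (d - 1) * l) (k' - l)
      (fun i => (c' i).1) (Prod.ext rfl hlastlev) (fun i hi => Prod.ext rfl (hothlev i hi))]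

end
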